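/- Let T be the homogeneous tree of degree q+1 with q ≥ 2, μ(y) = q^{ℓ(y)}, and for fixed vertex x and integer n ≥ 1 let f_{x,n}(y) = q^{−(ℓ(x)+d(x,y))/2}/(d(x,y)+n)². Then for every integer m ≥ 1, Σ_{y ∈ S_m(x)} q^{ℓ(y)/2} f_{x,n}(y) = (1/(m+n)²)·(2 + (m−1)(q−1)/q). -/

import Mathlib

open Finset Function

section aux
variable {V : Type*}

open scoped Classical in
noncomputable def desc (sons : V → Finset V) : ℕ → V → Finset V
  | 0, v => {v}
  | (k+1), v => (sons v).biUnion (desc sons k)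

lemma mem_desc {p : V → V} {sons : V → Finset V}
    (hsons : ∀ x y : V, y ∈ sons x ↔ p y = x) :
    ∀ (k : ℕ) (v y : V), y ∈ desc sons k v ↔ p^[k] y = v
  | 0, v, y => by simp [desc]
  | (k+1), v, y => by
    simp only [desc, mem_biUnion]
    constructor
    · rintro ⟨s, hs, hy⟩
      rw [mem_desc hsons] at hy
      rw [Function.iterate_succ_apply', hy]
      exact (hsons v s).1 hs
    · intro h
      refine ⟨p^[k] y, ?_, (mem_desc hsons k _ y).2 rfl⟩
      rw [hsons]
      rw [Function.iterate_succ_apply'] at h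
      exact h

lemma card_desc {q : ℕ} {p : V → V} {sons : V → Finset V}
    (hsons : ∀ x y : V, y ∈ sons x ↔ p y = x)
    (hcard : ∀ x : V, (sons x).card = q) :
    ∀ (k : ℕ) (v : V), (desc sons k v).card = q ^ k
  | 0, v => by simp [desc]
  | (k+1), v => by
    classical
    rw [desc, card_biUnion, Finset.sum_congr rfl (fun s _ => card_desc hsons hcard k s)]
    · simp [hcard, pow_succ, mul_comm]
    · intro s hs t ht hst
      refine Finset.disjoint_left.2 fun y hys hyt => hst ?_
      rw [mem_desc hsons] at hys hyt
      rw [← hys, hyt]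

end aux


/-- On the homogeneous tree of degree `q+1` with `q ≥ 2` (axiomatized as in the
paper: predecessor map `p` with fibers of cardinality `q`, level function `ℓ`
with `ℓ (p y) = ℓ y + 1`, loop-freeness, confluents, graph distance `d` given by
`d y x = min {i + j : p^[i] y = p^[j] x}`, symmetric, and spheres
`S_m(x) = {y : d(x,y) = m}` given as finite sets), for
`f_{x,n}(y) = q^{−(ℓ(x)+d(x,y))/2}/(d(x,y)+n)²` with `n ≥ 1`, for every `m ≥ 1`:
`Σ_{y ∈ S_m(x)} q^{ℓ(y)/2} f_{x,n}(y) = (1/(m+n)²)(2 + (m−1)(q−1)/q)`. -/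
theorem sphere_integration_lemma
    (q : ℕ) (hq : 2 ≤ q) (V : Type*)
    (p : V → V) (ℓ : V → ℤ)
    (hlevel : ∀ y : V, ℓ (p y) = ℓ y + 1)
    (sons : V → Finset V)
    (hsons : ∀ x y : V, y ∈ sons x ↔ p y = x)
    (hcard : ∀ x : V, (sons x).card = q)
    (hnoloop : ∀ (y : V) (i j : ℕ), p^[i] y = p^[j] y → i = j)
    (hconf : ∀ y x : V, ∃ i j : ℕ, p^[i] y = p^[j] x)
    (d : V → V → ℕ)
    (hd : ∀ y x : V, d y x = sInf {n : ℕ | ∃ i j : ℕ, i + j = n ∧ p^[i] y = p^[j] x})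
    (hdsymm : ∀ a b : V, d a b = d b a)
    (sphere : ℕ → V → Finset V)
    (hsphere : ∀ (m : ℕ) (x y : V), y ∈ sphere m x ↔ d x y = m)
    (x : V) (n : ℕ) (hn : 1 ≤ n) (m : ℕ) (hm : 1 ≤ m) :
    ∑ y ∈ sphere m x,
        (q : ℝ) ^ ((ℓ y : ℝ) / 2) *
          ((q : ℝ) ^ (-(((ℓ x : ℝ) + (d x y : ℝ)) / 2)) /
            ((d x y : ℝ) + (n : ℝ)) ^ 2)
      = 1 / ((m : ℝ) + (n : ℝ)) ^ 2 *
          (2 + ((m : ℝ) - 1) * ((q : ℝ) - 1) / (q : ℝ)) := by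
  classical
  have hq0 : (0:ℝ) < (q:ℝ) := by
    have : (0:ℕ) < q := by omega
    exact_mod_cast this
  have hℓk : ∀ (k : ℕ) (z : V), ℓ (p^[k] z) = ℓ z + k := by
    intro k
    induction k with
    | zero => simp
    | succ k ih =>
      intro z
      rw [Function.iterate_succ_apply', hlevel, ih]
      push_cast; ring
  have hshift : ∀ (y : V) (a b k : ℕ), p^[a] y = p^[b] x → p^[a+k] y = p^[b+k] x := by
    intro y a b k h
    rw [add_comm a k, add_comm b k, Function.iterate_add_apply,
      Function.iterate_add_apply, h]
  have hdiff : ∀ (y : V) (a b c e : ℕ), p^[a] y = p^[b] x → p^[c] y = p^[e] x →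
      (a:ℤ) + e = c + b := by
    intro y a b c e h1 h2
    have e1 : ℓ y + a = ℓ x + b := by rw [← hℓk a y, h1, hℓk]
    have e2 : ℓ y + c = ℓ x + e := by rw [← hℓk c y, h2, hℓk]
    omega
  set S : V → Set ℕ := fun y => {n : ℕ | ∃ i j : ℕ, i + j = n ∧ p^[i] y = p^[j] x} with hS
  have hSne : ∀ y : V, (S y).Nonempty := by
    intro y
    obtain ⟨i, j, h⟩ := hconf y x
    exact ⟨i + j, i, j, rfl, h⟩
  have hd' : ∀ y : V, d x y = sInf (S y) := by
    intro y; rw [hdsymm, hd]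
  have hmem : ∀ y : V, d x y ∈ S y := by
    intro y; rw [hd']; exact Nat.sInf_mem (hSne y)
  have hle : ∀ (y : V) (k : ℕ), k ∈ S y → d x y ≤ k := by
    intro y k hk; rw [hd']; exact Nat.sInf_le hk
  -- the pieces of the sphere
  set B : ℕ → Finset V := fun i =>
    (sphere m x).filter (fun y => p^[i] y = p^[m - i] x) with hB
  have hBsub : ∀ i, ∀ y ∈ B i, d x y = m := by
    intro i y hy
    exact (hsphere m x y).1 (mem_filter.1 hy).1
  have hdisj : ∀ i ∈ Finset.range (m+1), ∀ j ∈ Finset.range (m+1), i ≠ j →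
      Disjoint (B i) (B j) := by
    intro i hi j hj hij
    simp only [mem_range] at hi hj
    refine Finset.disjoint_left.2 fun y hyi hyj => hij ?_
    have h1 := (mem_filter.1 hyi).2
    have h2 := (mem_filter.1 hyj).2
    have := hdiff y i (m - i) j (m - j) h1 h2
    omega
  have hcover : sphere m x = (Finset.range (m+1)).biUnion B := by
    ext y
    simp only [mem_biUnion, mem_range]
    constructor
    · intro hy
      have hdm := (hsphere m x y).1 hy
      obtain ⟨i, j, hij, hrep⟩ := hmem y
      rw [hdm] at hij
      refine ⟨i, by omega, mem_filter.2 ⟨hy, ?_⟩⟩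
      have : m - i = j := by omega
      rw [this]; exact hrep
    · rintro ⟨i, hi, hyi⟩
      exact (mem_filter.1 hyi).1
  -- a sufficient condition for being at distance m
  have hdy : ∀ (y : V) (i : ℕ), i ≤ m → p^[i] y = p^[m-i] x →
      (∀ a b : ℕ, a + b + 2 ≤ m → p^[a] y = p^[b] x → False) → d x y = m := by
    intro y i hi hrep hmin
    have h1 : d x y ≤ m := hle y m ⟨i, m - i, by omega, hrep⟩
    obtain ⟨a, b, hab, hrab⟩ := hmem y
    have hd2 := hdiff y a b i (m - i) hrab hrep
    by_contra hne
    exact hmin a b (by omega) hrab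
  -- membership characterizations
  have hB0 : ∀ y, y ∈ B 0 ↔ y = p^[m] x := by
    intro y
    constructor
    · intro hy
      have := (mem_filter.1 hy).2
      simpa using this
    · intro hy
      refine mem_filter.2 ⟨(hsphere m x y).2 ?_, by simpa using hy⟩
      refine hdy y 0 (by omega) (by simpa using hy) ?_
      intro a b hab hrab
      have := hdiff y a b 0 m hrab (by simpa using hy)
      omega
  have hBm : ∀ y, y ∈ B m ↔ p^[m] y = x := by
    intro y
    constructor
    · intro hy
      have := (mem_filter.1 hy).2
      simpa using this
    · intro hy
      refine mem_filter.2 ⟨(hsphere m x y).2 ?_, by simpa using hy⟩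
      refine hdy y m le_rfl (by simpa using hy) ?_
      intro a b hab hrab
      have := hdiff y a b m 0 hrab (by simpa using hy)
      omega
  have hBmid : ∀ i, 1 ≤ i → i ≤ m - 1 → ∀ y,
      (y ∈ B i ↔ (p^[i] y = p^[m-i] x ∧ ¬ p^[i-1] y = p^[m-i-1] x)) := by
    intro i hi1 hi2 y
    constructor
    · intro hy
      refine ⟨(mem_filter.1 hy).2, fun hcon => ?_⟩
      have hlt : d x y ≤ (i-1) + (m-i-1) := hle y _ ⟨i-1, m-i-1, rfl, hcon⟩
      have := hBsub i y hy
      omega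
    · rintro ⟨hrep, hnrep⟩
      refine mem_filter.2 ⟨(hsphere m x y).2 ?_, hrep⟩
      refine hdy y i (by omega) hrep ?_
      intro a b hab hrab
      have hd2 := hdiff y a b i (m - i) hrab hrep
      have hk := hshift y a b (i - 1 - a) hrab
      have e1 : a + (i - 1 - a) = i - 1 := by omega
      have e2 : b + (i - 1 - a) = m - i - 1 := by omega
      rw [e1, e2] at hk
      exact hnrep hk
  -- cardinalities
  have hcB0 : (B 0).card = 1 := by
    have : B 0 = {p^[m] x} := by
      ext y; rw [hB0]; simp
    rw [this, card_singleton]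
  have hcBm : (B m).card = q ^ m := by
    have : B m = desc sons m x := by
      ext y; rw [hBm, mem_desc hsons]
    rw [this, card_desc hsons hcard]
  have hcBmid : ∀ i, 1 ≤ i → i ≤ m - 1 → (B i).card = (q-1) * q^(i-1) := by
    intro i hi1 hi2
    have hwm : p (p^[m-i-1] x) = p^[m-i] x := by
      conv_rhs => rw [show m - i = (m - i - 1) + 1 from by omega]
      rw [Function.iterate_succ_apply']
    have hwi : p^[m-i-1] x ∈ sons (p^[m-i] x) := (hsons _ _).2 hwm
    have hBeq : B i =
        ((sons (p^[m-i] x)).erase (p^[m-i-1] x)).biUnion (desc sons (i-1)) := by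
      ext y
      rw [hBmid i hi1 hi2]
      simp only [mem_biUnion, mem_erase]
      constructor
      · rintro ⟨hrep, hnrep⟩
        refine ⟨p^[i-1] y, ⟨hnrep, ?_⟩, (mem_desc hsons (i-1) _ y).2 rfl⟩
        rw [hsons]
        have h2 : p^[i-1+1] y = p^[m-i] x := by
          rw [show i - 1 + 1 = i from by omega]; exact hrep
        rw [Function.iterate_succ_apply'] at h2
        exact h2
      · rintro ⟨s, ⟨hsne, hs⟩, hy⟩
        rw [mem_desc hsons] at hy
        rw [hsons] at hs
        subst hy
        constructor
        · have h2 : p^[i-1+1] y = p^[m-i] x := by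
            rw [Function.iterate_succ_apply']; exact hs
          rwa [show i - 1 + 1 = i from by omega] at h2
        · exact hsne
    rw [hBeq, card_biUnion]
    · rw [Finset.sum_congr rfl (fun s _ => card_desc hsons hcard (i-1) s),
        Finset.sum_const, card_erase_of_mem hwi, hcard, smul_eq_mul]
    · intro s hs t ht hst
      refine Finset.disjoint_left.2 fun y hys hyt => hst ?_
      rw [mem_desc hsons] at hys hyt
      rw [← hys, hyt]
  -- levels
  have hlev : ∀ i, i ≤ m → ∀ y ∈ B i, (ℓ y : ℝ) = (ℓ x : ℝ) + m - 2*i := by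
    intro i hi y hy
    have hrep := (mem_filter.1 hy).2
    have e1 : ℓ y + i = ℓ x + (m - i : ℕ) := by
      rw [← hℓk i y, hrep, hℓk]
    have : (ℓ y : ℤ) = ℓ x + m - 2*i := by omega
    have := congrArg (fun z : ℤ => (z : ℝ)) this
    push_cast at this
    linarith
  -- value of the summand on each piece
  set R : ℝ := ((m : ℝ) + (n : ℝ)) ^ 2 with hR
  have hR0 : R ≠ 0 := by
    have : (0:ℝ) < (m:ℝ) + n := by positivity
    positivity
  have hterm : ∀ i, i ≤ m → ∀ y ∈ B i,
      (q : ℝ) ^ ((ℓ y : ℝ) / 2) *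
          ((q : ℝ) ^ (-(((ℓ x : ℝ) + (d x y : ℝ)) / 2)) /
            ((d x y : ℝ) + (n : ℝ)) ^ 2)
        = (q : ℝ) ^ (-(i:ℝ)) / R := by
    intro i hi y hy
    have hdxy : ((d x y : ℕ) : ℝ) = (m : ℝ) := by
      exact_mod_cast congrArg (Nat.cast : ℕ → ℝ) (hBsub i y hy)
    rw [hdxy, ← mul_div_assoc, ← Real.rpow_add hq0]
    congr 1
    rw [hlev i hi y hy]
    ring
  -- put it together
  rw [hcover, Finset.sum_biUnion]
  swap
  · intro i hi j hj hij
    exact hdisj i hi j hj hij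
  have hsum : ∀ i ∈ Finset.range (m+1),
      ∑ y ∈ B i, ((q : ℝ) ^ ((ℓ y : ℝ) / 2) *
          ((q : ℝ) ^ (-(((ℓ x : ℝ) + (d x y : ℝ)) / 2)) /
            ((d x y : ℝ) + (n : ℝ)) ^ 2))
        = ((B i).card : ℝ) * ((q : ℝ) ^ (-(i:ℝ)) / R) := by
    intro i hi
    simp only [mem_range] at hi
    rw [Finset.sum_congr rfl (fun y hy => hterm i (by omega) y hy),
      Finset.sum_const, nsmul_eq_mul]
  rw [Finset.sum_congr rfl hsum]
  -- split the index range
  have hsplit : Finset.range (m+1) = insert 0 (insert m (Finset.Ico 1 m)) := by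
    ext i
    simp only [mem_range, mem_insert, mem_Ico]
    omega
  have h0notin : (0:ℕ) ∉ insert m (Finset.Ico 1 m) := by
    simp only [mem_insert, mem_Ico]
    omega
  have hmnotin : m ∉ Finset.Ico 1 m := by simp
  rw [hsplit, Finset.sum_insert h0notin, Finset.sum_insert hmnotin]
  have hv0 : ((B 0).card : ℝ) * ((q : ℝ) ^ (-(0:ℕ):ℝ) / R) = 1 / R := by
    rw [hcB0]
    norm_num
  have hvm : ((B m).card : ℝ) * ((q : ℝ) ^ (-(m:ℕ):ℝ) / R) = 1 / R := by
    rw [hcBm, ← mul_div_assoc]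
    congr 1
    push_cast
    rw [← Real.rpow_natCast (q:ℝ) m, ← Real.rpow_add hq0]
    norm_num
  have hvmid : ∀ i ∈ Finset.Ico 1 m,
      ((B i).card : ℝ) * ((q : ℝ) ^ (-(i:ℕ):ℝ) / R)
        = ((q:ℝ) - 1) / (q:ℝ) / R := by
    intro i hi
    simp only [mem_Ico] at hi
    rw [hcBmid i hi.1 (by omega), ← mul_div_assoc]
    congr 1
    push_cast [Nat.cast_sub (by omega : 1 ≤ q)]
    rw [mul_assoc, ← Real.rpow_natCast (q:ℝ) (i-1), ← Real.rpow_add hq0]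
    have : ((i - 1 : ℕ) : ℝ) + -(i:ℝ) = -1 := by
      push_cast [Nat.cast_sub hi.1]
      ring
    rw [this, Real.rpow_neg_one]
    ring
  rw [hv0, hvm, Finset.sum_congr rfl hvmid, Finset.sum_const, Nat.card_Ico,
    nsmul_eq_mul]
  have hmc : ((m - 1 : ℕ) : ℝ) = (m:ℝ) - 1 := by
    push_cast [Nat.cast_sub hm]
    ring
  rw [hmc]
  field_simp
  ring
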